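/- Let Q be a quantale, M a shrinkable Q-module, and F_1, …, F_n multiplicative filters of Q; set F = F_1 ∩ ⋯ ∩ F_n. If a, b ∈ M satisfy a ≼_{F_k} b and b ≼_{F_k} a for every k = 1, …, n, then a ≼_F b and b ≼_F a. (Equivalently, the canonical map from the localization M_F to the product of the localizations M_{F_k} is injective.) -/

import Mathlib

universe u v

/-- A (commutative, integral) quantale: a complete lattice with a commutative monoid
structure whose unit is the top element and whose multiplication distributes over
arbitrary suprema. -/
class IntegralQuantale (Q : Type u) extends CompleteLattice Q, CommMonoid Q where
  one_eq_top : (1 : Q) = ⊤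
  mul_sSup : ∀ (a : Q) (S : Set Q), a * sSup S = ⨆ b ∈ S, a * b

/-- A module over a quantale. -/
class QModule (Q : Type u) [IntegralQuantale Q] (M : Type v) extends
    CompleteLattice M, SMul Q M where
  mul_smul' : ∀ (p q : Q) (m : M), (p * q) • m = p • (q • m)
  top_smul' : ∀ m : M, (⊤ : Q) • m = m
  smul_sSup' : ∀ (q : Q) (S : Set M), S.Nonempty → q • sSup S = ⨆ m ∈ S, q • m
  sSup_smul' : ∀ (S : Set Q) (m : M), S.Nonempty → (⨆ q ∈ S, (q : Q)) • m = ⨆ q ∈ S, q • m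

/-- A multiplicative filter of a quantale. -/
def IsMFilter {Q : Type u} [IntegralQuantale Q] (F : Set Q) : Prop :=
  ⊤ ∈ F ∧ (∀ a ∈ F, ∀ b : Q, a ≤ b → b ∈ F) ∧ ∀ a ∈ F, ∀ b ∈ F, a * b ∈ F

/-- `a ≼¹_F b`: `a` is locally less than `b` in one step; witnessed by a nonempty
family of pairs `(aᵢ, sᵢ)` with `sᵢ ∈ F`, `a ≤ ⨆ aᵢ` and `sᵢ • aᵢ ≤ b`. -/
def stepLE {Q : Type u} {M : Type v} [IntegralQuantale Q] [QModule Q M]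
    (F : Set Q) (a b : M) : Prop :=
  ∃ P : Set (M × Q), P.Nonempty ∧ (∀ p ∈ P, p.2 ∈ F) ∧
    (a ≤ ⨆ p ∈ P, Prod.fst p) ∧ ∀ p ∈ P, p.2 • p.1 ≤ b

/-- `a ≼ⁿ_F b`: locally less than in `n` steps. -/
def nStepLE {Q : Type u} {M : Type v} [IntegralQuantale Q] [QModule Q M]
    (F : Set Q) : ℕ → M → M → Prop
  | 0, a, b => a = b
  | n + 1, a, b => ∃ c : M, stepLE F a c ∧ nStepLE F n c b

/-- `a ≼_F b`: locally less than (in some positive number of steps). -/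
def localLE {Q : Type u} {M : Type v} [IntegralQuantale Q] [QModule Q M]
    (F : Set Q) (a b : M) : Prop :=
  ∃ n : ℕ, 1 ≤ n ∧ nStepLE F n a b

/-- A complete lattice is shrinkable if every inequality `x ≤ ⨆ xᵢ` can be shrunk
to an equality `x = ⨆ yⱼ` with each `yⱼ` below a finite subsupremum of the `xᵢ`. -/
def Shrinkable (L : Type u) [CompleteLattice L] : Prop :=
  ∀ (x : L) (S : Set L), S.Nonempty → x ≤ sSup S →
    ∃ Y : Set L, Y.Nonempty ∧ x = sSup Y ∧
      ∀ y ∈ Y, ∃ T : Finset L, T.Nonempty ∧ ↑T ⊆ S ∧ y ≤ T.sup id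
section Aux
variable {Q : Type u} {M : Type v} [IntegralQuantale Q] [QModule Q M]

lemma qm_smul_sup (q : Q) (x y : M) : q • (x ⊔ y) = q • x ⊔ q • y := by
  have h := QModule.smul_sSup' (M := M) q {x, y} ⟨x, by simp⟩
  simpa [iSup_or, iSup_sup_eq, iSup_iSup_eq_left, iSup_iSup_eq_right] using h

lemma qm_sup_smul (p q : Q) (x : M) : (p ⊔ q) • x = p • x ⊔ q • x := by
  have h := QModule.sSup_smul' (M := M) {p, q} x ⟨p, by simp⟩
  simpa [iSup_or, iSup_sup_eq, iSup_iSup_eq_left, iSup_iSup_eq_right] using h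

lemma qm_smul_le_self (q : Q) (x : M) : q • x ≤ x := by
  have h := qm_sup_smul q ⊤ x
  rw [sup_top_eq, QModule.top_smul'] at h
  exact le_sup_left.trans h.ge

lemma qm_smul_mono_left {p q : Q} (h : p ≤ q) (x : M) : p • x ≤ q • x := by
  have hh := qm_sup_smul p q x
  rw [sup_eq_right.mpr h] at hh
  rw [hh]; exact le_sup_left

lemma qm_smul_mono_right (q : Q) {x y : M} (h : x ≤ y) : q • x ≤ q • y := by
  have hh := qm_smul_sup q x y
  rw [sup_eq_right.mpr h] at hh
  rw [hh]; exact le_sup_left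

lemma q_mul_sup (a b c : Q) : a * (b ⊔ c) = a * b ⊔ a * c := by
  have h := IntegralQuantale.mul_sSup a {b, c}
  simpa [iSup_or, iSup_sup_eq, iSup_iSup_eq_left, iSup_iSup_eq_right] using h

lemma q_mul_mono_right (a : Q) {b c : Q} (h : b ≤ c) : a * b ≤ a * c := by
  have hh := q_mul_sup a b c
  rw [sup_eq_right.mpr h] at hh
  rw [hh]; exact le_sup_left

lemma q_mul_le_right (a b : Q) : a * b ≤ b := by
  have h : a * b ≤ a * 1 := q_mul_mono_right a (by rw [IntegralQuantale.one_eq_top]; exact le_top)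
  rw [mul_one] at h
  calc a * b = b * a := mul_comm a b
  _ = a * b := mul_comm b a
  _ ≤ b := by
    have : a * b ≤ ⊤ * b := by
      calc a * b = b * a := mul_comm a b
      _ ≤ b * ⊤ := q_mul_mono_right b le_top
      _ = ⊤ * b := mul_comm b ⊤
    rwa [← IntegralQuantale.one_eq_top, one_mul] at this

end Aux

section Aux2
variable {Q : Type u} {M : Type v} [IntegralQuantale Q] [QModule Q M]

/-- The one-step local-below operator. -/
def jop (F : Set Q) (x : M) : M := sSup {y | ∃ s ∈ F, s • y ≤ x}

lemma jop_mono (F : Set Q) {x y : M} (h : x ≤ y) : jop F x ≤ (jop F y : M) :=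
  sSup_le_sSup fun z ⟨s, hs, hz⟩ => ⟨s, hs, hz.trans h⟩

lemma le_jop (F : Set Q) (h : ⊤ ∈ F) (x : M) : x ≤ jop F x :=
  le_sSup ⟨⊤, h, by rw [QModule.top_smul']⟩

lemma jop_iter_mono (F : Set Q) (n : ℕ) {x y : M} (h : x ≤ y) :
    (jop F)^[n] x ≤ (jop F)^[n] y := by
  induction n with
  | zero => simpa using h
  | succ n ih =>
    rw [Function.iterate_succ_apply', Function.iterate_succ_apply']
    exact jop_mono F ih

lemma stepLE.le_jop {F : Set Q} {a b : M} (h : stepLE F a b) : a ≤ jop F b := by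
  obtain ⟨P, _, h2, h3, h4⟩ := h
  refine h3.trans (iSup₂_le fun p hp => le_sSup ⟨p.2, h2 p hp, h4 p hp⟩)

lemma stepLE_of_le_jop {F : Set Q} (hT : ⊤ ∈ F) {a b : M} (h : a ≤ jop F b) :
    stepLE F a b := by
  refine ⟨{p : M × Q | p.2 ∈ F ∧ p.2 • p.1 ≤ b}, ⟨(b, ⊤), hT, by
    rw [QModule.top_smul']⟩, fun p hp => hp.1, ?_, fun p hp => hp.2⟩
  refine h.trans (sSup_le fun y hy => ?_)
  obtain ⟨s, hs, hsy⟩ := hy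
  exact le_iSup₂_of_le (y, s) ⟨hs, hsy⟩ le_rfl

lemma nStepLE.le_jop_iter {F : Set Q} {n : ℕ} {a b : M} (h : nStepLE F n a b) :
    a ≤ (jop F)^[n] b := by
  induction n generalizing a with
  | zero => exact le_of_eq h
  | succ n ih =>
    obtain ⟨c, h1, h2⟩ := h
    rw [Function.iterate_succ_apply']
    exact h1.le_jop.trans (jop_mono F (ih h2))

lemma localLE_of_le_jop_iter {F : Set Q} (hT : ⊤ ∈ F) {n : ℕ} {a b : M}
    (h : a ≤ (jop F)^[n] b) : localLE F a b := by
  induction n generalizing a with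
  | zero =>
    exact ⟨1, le_rfl, b, stepLE_of_le_jop hT (h.trans (le_jop F hT b)), rfl⟩
  | succ n ih =>
    rw [Function.iterate_succ_apply'] at h
    obtain ⟨m, hm, hchain⟩ := ih (le_refl ((jop F)^[n] b))
    exact ⟨m + 1, by omega, (jop F)^[n] b, stepLE_of_le_jop hT h, hchain⟩

lemma localLE.le_jop_iter {F : Set Q} {a b : M} (h : localLE F a b) :
    ∃ n, a ≤ (jop F)^[n] b := by
  obtain ⟨n, _, h⟩ := h
  exact ⟨n, h.le_jop_iter⟩

lemma localLE_of_le {F : Set Q} (hT : ⊤ ∈ F) {a b : M} (h : a ≤ b) : localLE F a b :=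
  localLE_of_le_jop_iter hT (n := 0) h

lemma nStepLE_trans {F : Set Q} {n m : ℕ} {a b c : M}
    (h1 : nStepLE F n a b) (h2 : nStepLE F m b c) : nStepLE F (n + m) a c := by
  induction n generalizing a with
  | zero => rw [Nat.zero_add]; exact h1 ▸ h2
  | succ n ih =>
    obtain ⟨d, hd1, hd2⟩ := h1
    rw [Nat.succ_add]
    exact ⟨d, hd1, ih hd2⟩

lemma localLE_trans {F : Set Q} {a b c : M} (h1 : localLE F a b) (h2 : localLE F b c) :
    localLE F a c := by
  obtain ⟨n, hn, h1⟩ := h1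
  obtain ⟨m, hm, h2⟩ := h2
  exact ⟨n + m, by omega, nStepLE_trans h1 h2⟩

lemma stepLE_sup {F : Set Q} {a b c d : M} (h1 : stepLE F a b) (h2 : stepLE F c d) :
    stepLE F (a ⊔ c) (b ⊔ d) := by
  obtain ⟨P1, hne1, hm1, hle1, hs1⟩ := h1
  obtain ⟨P2, hne2, hm2, hle2, hs2⟩ := h2
  refine ⟨P1 ∪ P2, hne1.mono Set.subset_union_left, ?_, ?_, ?_⟩
  · rintro p (hp | hp)
    exacts [hm1 p hp, hm2 p hp]
  · refine sup_le (hle1.trans ?_) (hle2.trans ?_) <;>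
      exact biSup_mono (by intro p hp; first | exact Or.inl hp | exact Or.inr hp)
  · rintro p (hp | hp)
    exacts [(hs1 p hp).trans le_sup_left, (hs2 p hp).trans le_sup_right]

lemma stepLE_refl {F : Set Q} (hT : ⊤ ∈ F) (a : M) : stepLE F a a :=
  stepLE_of_le_jop hT (le_jop F hT a)

lemma nStepLE_pad {F : Set Q} (hT : ⊤ ∈ F) {n : ℕ} {a b : M} (h : nStepLE F n a b) :
    nStepLE F (n + 1) a b := ⟨a, stepLE_refl hT a, h⟩

lemma nStepLE_of_le {F : Set Q} (hT : ⊤ ∈ F) {n m : ℕ} (hnm : n ≤ m) {a b : M}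
    (h : nStepLE F n a b) : nStepLE F m a b := by
  induction m with
  | zero => exact (Nat.le_zero.mp hnm) ▸ h
  | succ m ih =>
    rcases Nat.lt_or_ge n (m + 1) with hlt | hge
    · exact nStepLE_pad hT (ih (by omega))
    · have : n = m + 1 := by omega
      exact this ▸ h

lemma nStepLE_sup {F : Set Q} {n : ℕ} {a b c d : M}
    (h1 : nStepLE F n a b) (h2 : nStepLE F n c d) : nStepLE F n (a ⊔ c) (b ⊔ d) := by
  induction n generalizing a c with
  | zero => rw [show a = b from h1, show c = d from h2]; rfl
  | succ n ih =>
    obtain ⟨x, hx1, hx2⟩ := h1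
    obtain ⟨y, hy1, hy2⟩ := h2
    exact ⟨x ⊔ y, stepLE_sup hx1 hy1, ih hx2 hy2⟩

lemma localLE_sup {F : Set Q} (hT : ⊤ ∈ F) {a b c d : M}
    (h1 : localLE F a b) (h2 : localLE F c d) : localLE F (a ⊔ c) (b ⊔ d) := by
  obtain ⟨n, hn, h1⟩ := h1
  obtain ⟨m, hm, h2⟩ := h2
  exact ⟨max n m, by omega,
    nStepLE_sup (nStepLE_of_le hT (le_max_left n m) h1)
      (nStepLE_of_le hT (le_max_right n m) h2)⟩

lemma nStepLE_mono_filter {F F' : Set Q} (hFF : F ⊆ F') {n : ℕ} {a b : M}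
    (h : nStepLE F n a b) : nStepLE F' n a b := by
  induction n generalizing a with
  | zero => exact h
  | succ n ih =>
    obtain ⟨c, ⟨P, hne, hm, hle, hs⟩, h2⟩ := h
    exact ⟨c, ⟨P, hne, fun p hp => hFF (hm p hp), hle, hs⟩, ih h2⟩

lemma localLE_mono_filter {F F' : Set Q} (hFF : F ⊆ F') {a b : M}
    (h : localLE F a b) : localLE F' a b := by
  obtain ⟨n, hn, h⟩ := h
  exact ⟨n, hn, nStepLE_mono_filter hFF h⟩

end Aux2
section Aux3
variable {Q : Type u} {M : Type v} [IntegralQuantale Q] [QModule Q M]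

lemma finset_merge {F : Set Q} (hF : IsMFilter F) (P : M) (T : Finset M)
    (hT : ∀ y ∈ T, ∃ s ∈ F, s • y ≤ P) : ∃ s ∈ F, s • (T.sup id) ≤ P := by
  classical
  induction T using Finset.induction_on with
  | empty =>
    refine ⟨⊤, hF.1, ?_⟩
    rw [Finset.sup_empty, QModule.top_smul']
    exact bot_le
  | insert y T hnotmem ih =>
    obtain ⟨sy, hsy, hsyP⟩ := hT y (Finset.mem_insert_self y T)
    obtain ⟨s, hs, hsP⟩ := ih fun z hz => hT z (Finset.mem_insert_of_mem hz)
    refine ⟨sy * s, hF.2.2 sy hsy s hs, ?_⟩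
    rw [Finset.sup_insert, qm_smul_sup]
    refine sup_le (le_trans ?_ hsyP) (le_trans ?_ hsP)
    · exact (qm_smul_mono_left (by
        calc sy * s = s * sy := mul_comm sy s
        _ ≤ sy := q_mul_le_right s sy) (id y))
    · exact qm_smul_mono_left (q_mul_le_right sy s) (T.sup id)

lemma shrink_step (hM : Shrinkable M) {F : Set Q} (hF : IsMFilter F) {z P : M}
    (h : z ≤ jop F P) :
    ∃ Y : Set M, Y.Nonempty ∧ z = sSup Y ∧ ∀ y ∈ Y, ∃ s ∈ F, s • y ≤ P := by
  have hne : {y : M | ∃ s ∈ F, s • y ≤ P}.Nonempty :=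
    ⟨P, ⊤, hF.1, by rw [QModule.top_smul']⟩
  obtain ⟨Y, hYne, hzY, hY⟩ := hM z _ hne h
  refine ⟨Y, hYne, hzY, fun y hy => ?_⟩
  obtain ⟨T, _, hTS, hyT⟩ := hY y hy
  obtain ⟨s, hs, hsP⟩ := finset_merge hF P T fun w hw => hTS hw
  exact ⟨s, hs, (qm_smul_mono_right s hyT).trans hsP⟩

lemma inter_mem_top {F G : Set Q} (hF : IsMFilter F) (hG : IsMFilter G) :
    ⊤ ∈ F ∩ G := ⟨hF.1, hG.1⟩

/-- The key two-filter merging engine. -/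
lemma key_merge (hM : Shrinkable M) {F G : Set Q} (hF : IsMFilter F) (hG : IsMFilter G)
    (a : M) : ∀ k n m, n + m ≤ k → ∀ z : M,
      z ≤ (jop F)^[n] a → z ≤ (jop G)^[m] a → localLE (F ∩ G) z a := by
  have hT : ⊤ ∈ F ∩ G := ⟨hF.1, hG.1⟩
  intro k
  induction k with
  | zero =>
    intro n m hnm z hzF hzG
    obtain ⟨rfl, rfl⟩ : n = 0 ∧ m = 0 := by omega
    exact localLE_of_le hT hzF
  | succ k ih =>
    rintro (_ | n) m hnm z hzF hzG
    · exact localLE_of_le hT hzF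
    rcases m with _ | m
    · exact localLE_of_le hT hzG
    -- main case
    set P : M := (jop F)^[n] a with hP
    set Q' : M := (jop G)^[m] a with hQ'
    have hzF' : z ≤ jop F P := by
      rwa [Function.iterate_succ_apply'] at hzF
    have hzG' : z ≤ jop G Q' := by
      rwa [Function.iterate_succ_apply'] at hzG
    set A : M := P ⊓ (jop G)^[m + 1] a with hA
    set B : M := (jop F)^[n + 1] a ⊓ Q' with hB
    have hAa : localLE (F ∩ G) A a :=
      ih n (m + 1) (by omega) A inf_le_left inf_le_right
    have hBa : localLE (F ∩ G) B a :=
      ih (n + 1) m (by omega) B inf_le_left inf_le_right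
    have hABa : localLE (F ∩ G) (A ⊔ B) a := by
      have := localLE_sup hT hAa hBa
      rwa [sup_idem] at this
    -- one combined step from z into A ⊔ B
    obtain ⟨Y, hYne, hzY, hY⟩ := shrink_step hM hF hzF'
    have hstep : stepLE (F ∩ G) z (A ⊔ B) := by
      refine ⟨{p : M × Q | p.2 ∈ F ∩ G ∧ p.2 • p.1 ≤ A ⊔ B},
        ⟨(A ⊔ B, ⊤), hT, by rw [QModule.top_smul']⟩,
        fun p hp => hp.1, ?_, fun p hp => hp.2⟩
      rw [hzY]
      refine sSup_le fun y hy => ?_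
      obtain ⟨s, hsF, hsP⟩ := hY y hy
      have hyz : y ≤ z := hzY ▸ le_sSup hy
      obtain ⟨W, hWne, hyW, hW⟩ := shrink_step hM hG (hyz.trans hzG')
      rw [hyW]
      refine sSup_le fun w hw => ?_
      obtain ⟨t, htG, htQ⟩ := hW w hw
      have hwy : w ≤ y := hyW ▸ le_sSup hw
      have hwz : w ≤ z := hwy.trans hyz
      have hmem : (w, s ⊔ t) ∈ {p : M × Q | p.2 ∈ F ∩ G ∧ p.2 • p.1 ≤ A ⊔ B} := by
        constructor
        · exact ⟨hF.2.1 s hsF (s ⊔ t) le_sup_left, hG.2.1 t htG (s ⊔ t) le_sup_right⟩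
        · show (s ⊔ t) • w ≤ A ⊔ B
          rw [qm_sup_smul]
          refine sup_le (le_sup_left.trans' ?_) (le_sup_right.trans' ?_)
          · refine le_inf ((qm_smul_mono_right s hwy).trans hsP) ?_
            exact (qm_smul_le_self s w).trans (hwz.trans hzG)
          · refine le_inf ?_ htQ
            exact (qm_smul_le_self t w).trans (hwz.trans hzF)
      exact le_iSup₂_of_le (w, s ⊔ t) hmem le_rfl
    exact localLE_trans ⟨1, le_rfl, A ⊔ B, hstep, rfl⟩ hABa

end Aux3
section Aux4
variable {Q : Type u} {M : Type v} [IntegralQuantale Q] [QModule Q M]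

lemma two_filter_merge (hM : Shrinkable M) {F G : Set Q} (hF : IsMFilter F)
    (hG : IsMFilter G) {z a : M} (h1 : localLE F z a) (h2 : localLE G z a) :
    localLE (F ∩ G) z a := by
  obtain ⟨n, hn⟩ := h1.le_jop_iter
  obtain ⟨m, hm⟩ := h2.le_jop_iter
  exact key_merge hM hF hG a (n + m) n m le_rfl z hn hm

lemma isMFilter_iInter {ι : Sort*} {F : ι → Set Q} (hF : ∀ k, IsMFilter (F k)) :
    IsMFilter (⋂ k, F k) := by
  refine ⟨Set.mem_iInter.mpr fun k => (hF k).1, ?_, ?_⟩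
  · intro x hx y hxy
    exact Set.mem_iInter.mpr fun k => (hF k).2.1 x (Set.mem_iInter.mp hx k) y hxy
  · intro x hx y hy
    exact Set.mem_iInter.mpr fun k =>
      (hF k).2.2 x (Set.mem_iInter.mp hx k) y (Set.mem_iInter.mp hy k)

lemma fin_filter_merge (hM : Shrinkable M) :
    ∀ (n : ℕ) (F : Fin (n + 1) → Set Q), (∀ k, IsMFilter (F k)) →
      ∀ z a : M, (∀ k, localLE (F k) z a) → localLE (⋂ k, F k) z a := by
  intro n
  induction n with
  | zero =>
    intro F hF z a h
    have : (⋂ k, F k) = F 0 := by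
      ext q; simp [Set.mem_iInter, Fin.forall_fin_one]
    rw [this]
    exact h 0
  | succ n ih =>
    intro F hF z a h
    have htail := ih (fun k : Fin (n + 1) => F k.succ) (fun k : Fin (n + 1) => hF k.succ) z a (fun k : Fin (n + 1) => h k.succ)
    have hmerge := two_filter_merge hM (hF 0)
      (isMFilter_iInter fun k : Fin (n + 1) => hF k.succ) (h 0) htail
    have : (⋂ k, F k) = F 0 ∩ ⋂ k : Fin (n + 1), F k.succ := by
      ext q
      simp only [Set.mem_iInter, Set.mem_inter_iff, Fin.forall_fin_succ]
    rw [this]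
    exact hmerge

end Aux4


/-- First filter merging theorem (injectivity): if `a` and `b` are identified in each
localization `M_{F_k}`, then they are identified in `M_{F_1 ∩ ⋯ ∩ F_n}`. -/
theorem finite_filter_merge_injective {Q : Type u} {M : Type v}
    [IntegralQuantale Q] [QModule Q M] (hM : Shrinkable M)
    (n : ℕ) (hn : 0 < n) (F : Fin n → Set Q) (hF : ∀ k, IsMFilter (F k))
    (a b : M) (hab : ∀ k, localLE (F k) a b) (hba : ∀ k, localLE (F k) b a) :
    localLE (⋂ k, F k) a b ∧ localLE (⋂ k, F k) b a := by
  obtain ⟨n', rfl⟩ : ∃ n', n = n' + 1 := ⟨n - 1, by omega⟩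
  exact ⟨fin_filter_merge hM n' F hF a b hab, fin_filter_merge hM n' F hF b a hba⟩
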